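/- Let H be a complex Hilbert space, let T be a bounded linear operator on H, and let r > 0. Define F(T,r) to be the set of all η ∈ H for which there exists a sequence (η_n)_{n≥1} in H with lim_{n→∞} ‖T^n η_n − η‖ = 0 and limsup_{n→∞} ‖η_n‖^{1/n} ≤ 1/r. Then F(T,r) is a closed linear subspace of H, and for every bounded linear operator S on H with ST = TS one has S(F(T,r)) ⊆ F(T,r). -/

import Mathlib

open Filter
open scoped ENNReal NNReal

/-- The Haagerup–Schultz co-growth subspace `F(T,r)`. -/
def cogrowthSubspace {H : Type*} [NormedAddCommGroup H] [InnerProductSpace ℂ H]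
    (T : H →L[ℂ] H) (r : ℝ) : Set H :=
  {η : H | ∃ u : ℕ → H,
    Tendsto (fun n => ‖(T ^ n) (u n) - η‖) atTop (nhds 0) ∧
    Filter.limsup (fun n => (‖u n‖₊ : ℝ≥0∞) ^ (1 / (n : ℝ))) atTop ≤
      ENNReal.ofReal (1 / r)}

namespace CogrowthAux

/-- the approximation constants `1/r + 1/(k+1)` -/
noncomputable def ck (r : ℝ) (k : ℕ) : ℝ := 1 / r + 1 / ((k : ℝ) + 1)

lemma ck_pos {r : ℝ} (hr : 0 < r) (k : ℕ) : 0 < ck r k := by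
  unfold ck; positivity

lemma lt_ck {r : ℝ} (hr : 0 < r) (k : ℕ) : 1 / r < ck r k :=
  lt_add_of_pos_right _ (by positivity)

lemma ck_anti {r : ℝ} {k m : ℕ} (h : k ≤ m) : ck r m ≤ ck r k := by
  unfold ck
  have : (1 : ℝ) / ((m : ℝ) + 1) ≤ 1 / ((k : ℝ) + 1) := by
    apply one_div_le_one_div_of_le (by positivity)
    exact_mod_cast Nat.succ_le_succ h
  linarith

lemma ck_strict_anti {r : ℝ} {k m : ℕ} (h : k < m) : ck r m < ck r k := by
  unfold ck
  have : (1 : ℝ) / ((m : ℝ) + 1) < 1 / ((k : ℝ) + 1) := by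
    apply one_div_lt_one_div_of_lt (by positivity)
    exact_mod_cast Nat.succ_lt_succ h
  linarith

lemma ck_tendsto (r : ℝ) :
    Tendsto (fun k : ℕ => ck r k) atTop (nhds (1 / r)) := by
  have h2 := tendsto_one_div_add_atTop_nhds_zero_nat (𝕜 := ℝ)
  have h := (tendsto_const_nhds (x := (1 : ℝ) / r) (f := atTop (α := ℕ))).add h2
  rw [add_zero] at h
  exact h

variable {H : Type*} [NormedAddCommGroup H] [InnerProductSpace ℂ H]

lemma rpow_le_of_norm_le {ξ : H} {c : ℝ} (hc : 0 ≤ c) {n : ℕ} (hn : 1 ≤ n)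
    (h : ‖ξ‖ ≤ c ^ n) : (‖ξ‖₊ : ℝ≥0∞) ^ (1 / (n : ℝ)) ≤ ENNReal.ofReal c := by
  have hn0 : (n : ℝ) ≠ 0 := Nat.cast_ne_zero.2 (by omega)
  have h1 : (‖ξ‖₊ : ℝ≥0∞) ≤ ENNReal.ofReal c ^ n := by
    rw [← ENNReal.ofReal_pow hc, ← ENNReal.ofReal_coe_nnreal, coe_nnnorm]
    exact ENNReal.ofReal_le_ofReal h
  calc (‖ξ‖₊ : ℝ≥0∞) ^ (1 / (n : ℝ))
      ≤ (ENNReal.ofReal c ^ n) ^ (1 / (n : ℝ)) :=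
        ENNReal.rpow_le_rpow h1 (by positivity)
    _ = ENNReal.ofReal c := by
        rw [← ENNReal.rpow_natCast, ← ENNReal.rpow_mul,
          mul_one_div_cancel hn0, ENNReal.rpow_one]

lemma norm_le_of_rpow_le {ξ : H} {c : ℝ} (hc : 0 ≤ c) {n : ℕ} (hn : 1 ≤ n)
    (h : (‖ξ‖₊ : ℝ≥0∞) ^ (1 / (n : ℝ)) ≤ ENNReal.ofReal c) : ‖ξ‖ ≤ c ^ n := by
  have hn0 : (n : ℝ) ≠ 0 := Nat.cast_ne_zero.2 (by omega)
  have h1 : (‖ξ‖₊ : ℝ≥0∞) ≤ ENNReal.ofReal (c ^ n) := by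
    have := ENNReal.rpow_le_rpow h (le_of_lt (by positivity : (0:ℝ) < (n : ℝ)))
    rw [← ENNReal.rpow_mul, one_div_mul_cancel hn0, ENNReal.rpow_one] at this
    rw [ENNReal.ofReal_pow hc, ← ENNReal.rpow_natCast]
    exact this
  rw [← ENNReal.ofReal_coe_nnreal, coe_nnnorm] at h1
  exact (ENNReal.ofReal_le_ofReal_iff (by positivity)).1 h1

variable (T : H →L[ℂ] H) {r : ℝ}

/-- Forward direction: a member of `F(T,r)` admits good finite approximants. -/
lemma fwd (hr : 0 < r) {η : H} (hη : η ∈ cogrowthSubspace T r) (k : ℕ) :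
    ∀ᶠ n in atTop, ∃ ξ : H, ‖(T ^ n) ξ - η‖ ≤ 1 / ((k : ℝ) + 1) ∧ ‖ξ‖ ≤ ck r k ^ n := by
  obtain ⟨u, hu1, hu2⟩ := hη
  have h1 : ∀ᶠ n in atTop, ‖(T ^ n) (u n) - η‖ < 1 / ((k : ℝ) + 1) :=
    hu1.eventually_lt_const (by positivity)
  have hlt : Filter.limsup (fun n => (‖u n‖₊ : ℝ≥0∞) ^ (1 / (n : ℝ))) atTop
      < ENNReal.ofReal (ck r k) :=
    lt_of_le_of_lt hu2 ((ENNReal.ofReal_lt_ofReal_iff (ck_pos hr k)).2 (lt_ck hr k))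
  have h2 := Filter.eventually_lt_of_limsup_lt hlt
  filter_upwards [h1, h2, eventually_ge_atTop 1] with n hn1 hn2 hn3
  exact ⟨u n, hn1.le, norm_le_of_rpow_le (ck_pos hr k).le hn3 hn2.le⟩

/-- Backward direction (with constants): good approximants give membership. -/
lemma bwd (hr : 0 < r) {η : H} {C D : ℝ} (hC : 0 ≤ C) (hD : 0 ≤ D)
    (h : ∀ k : ℕ, ∀ᶠ n in atTop, ∃ ξ : H,
      ‖(T ^ n) ξ - η‖ ≤ D / ((k : ℝ) + 1) ∧ ‖ξ‖ ≤ C * ck r k ^ n) :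
    η ∈ cogrowthSubspace T r := by
  classical
  -- Step 1: remove the constants C, D
  have h1 : ∀ k : ℕ, ∀ᶠ n in atTop, ∃ ξ : H,
      ‖(T ^ n) ξ - η‖ ≤ 1 / ((k : ℝ) + 1) ∧ ‖ξ‖ ≤ ck r k ^ n := by
    intro k
    set m : ℕ := k + 1 + ⌈D * ((k : ℝ) + 1)⌉₊ with hm
    have hkm : k < m := by omega
    have hcm : ck r m < ck r k := ck_strict_anti hkm
    have hcm0 : 0 < ck r m := ck_pos hr m
    have hq : 1 < ck r k / ck r m := (one_lt_div hcm0).2 hcm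
    have hev : ∀ᶠ n in atTop, C ≤ (ck r k / ck r m) ^ n :=
      (tendsto_pow_atTop_atTop_of_one_lt hq).eventually_ge_atTop C
    have hDm : D * ((k : ℝ) + 1) ≤ (m : ℝ) + 1 := by
      have h1 := Nat.le_ceil (D * ((k : ℝ) + 1))
      have h2 : ((⌈D * ((k : ℝ) + 1)⌉₊ : ℕ) : ℝ) ≤ (m : ℝ) := by
        rw [hm]; push_cast; linarith [Nat.cast_nonneg (α := ℝ) k]
      linarith
    filter_upwards [h m, hev] with n hn hevn
    obtain ⟨ξ, hξ1, hξ2⟩ := hn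
    refine ⟨ξ, hξ1.trans ?_, hξ2.trans ?_⟩
    · rw [div_le_div_iff₀ (by positivity) (by positivity)]
      nlinarith
    · calc C * ck r m ^ n ≤ (ck r k / ck r m) ^ n * ck r m ^ n :=
            mul_le_mul_of_nonneg_right hevn (by positivity)
        _ = ck r k ^ n := by rw [← mul_pow, div_mul_cancel₀ _ hcm0.ne']
  -- Step 2: diagonal argument
  choose N₀ hN₀ using fun k => eventually_atTop.1 (h1 k)
  set N : ℕ → ℕ := fun k => k + (Finset.range (k + 1)).sup N₀ with hNdef
  have hN₀N : ∀ k, N₀ k ≤ N k := fun k =>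
    le_add_left (Finset.le_sup (Finset.self_mem_range_succ k))
  have hkN : ∀ k, k ≤ N k := fun k => Nat.le_add_right _ _
  set φ : ℕ → ℕ := fun n => Nat.findGreatest (fun k => N k ≤ n) n with hφdef
  have hφ1 : ∀ n, N 0 ≤ n → N (φ n) ≤ n := fun n hn =>
    Nat.findGreatest_spec (P := fun k => N k ≤ n) (Nat.zero_le n) hn
  have hφ2 : ∀ k n, N k ≤ n → k ≤ φ n := fun k n hn =>
    Nat.le_findGreatest ((hkN k).trans hn) hn
  have hφtop : Tendsto φ atTop atTop :=
    tendsto_atTop_atTop.2 fun k => ⟨N k, fun n hn => hφ2 k n hn⟩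
  set Q : ℕ → Prop := fun n => ∃ ξ : H,
    ‖(T ^ n) ξ - η‖ ≤ 1 / ((φ n : ℝ) + 1) ∧ ‖ξ‖ ≤ ck r (φ n) ^ n with hQdef
  have hQ : ∀ n, N 0 ≤ n → Q n := fun n hn => hN₀ (φ n) n ((hN₀N (φ n)).trans (hφ1 n hn))
  set u : ℕ → H := fun n => if hq : Q n then hq.choose else 0 with hudef
  have huspec : ∀ n (hn : N 0 ≤ n),
      ‖(T ^ n) (u n) - η‖ ≤ 1 / ((φ n : ℝ) + 1) ∧ ‖u n‖ ≤ ck r (φ n) ^ n := by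
    intro n hn
    have hq := hQ n hn
    simp only [hudef, dif_pos hq]
    exact hq.choose_spec
  refine ⟨u, ?_, ?_⟩
  · -- tendsto to 0
    have hb : Tendsto (fun n => 1 / ((φ n : ℝ) + 1)) atTop (nhds 0) :=
      tendsto_one_div_add_atTop_nhds_zero_nat.comp hφtop
    refine squeeze_zero' (Eventually.of_forall fun n => norm_nonneg _) ?_ hb
    filter_upwards [eventually_ge_atTop (N 0)] with n hn
    exact (huspec n hn).1
  · -- limsup bound
    have key : ∀ k : ℕ, Filter.limsup (fun n => (‖u n‖₊ : ℝ≥0∞) ^ (1 / (n : ℝ))) atTop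
        ≤ ENNReal.ofReal (ck r k) := by
      intro k
      refine Filter.limsup_le_of_le (by isBoundedDefault) ?_
      filter_upwards [eventually_ge_atTop (N 0), eventually_ge_atTop (N k),
        eventually_ge_atTop 1] with n hn0 hnk hn1
      have hφk : k ≤ φ n := hφ2 k n hnk
      have hub : ‖u n‖ ≤ ck r k ^ n :=
        (huspec n hn0).2.trans (pow_le_pow_left₀ (ck_pos hr _).le (ck_anti hφk) n)
      exact rpow_le_of_norm_le (ck_pos hr k).le hn1 hub
    have hlim : Tendsto (fun k : ℕ => ENNReal.ofReal (ck r k)) atTop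
        (nhds (ENNReal.ofReal (1 / r))) := ENNReal.tendsto_ofReal (ck_tendsto r)
    exact ge_of_tendsto hlim (Eventually.of_forall key)

end CogrowthAux

/-- `F(T,r)` is a closed linear subspace, invariant under every bounded operator
commuting with `T` (i.e. `T`-hyperinvariant). -/
theorem stmt9 {H : Type*} [NormedAddCommGroup H] [InnerProductSpace ℂ H] [CompleteSpace H]
    (T : H →L[ℂ] H) (r : ℝ) (hr : 0 < r) :
    IsClosed (cogrowthSubspace T r) ∧
    (0 : H) ∈ cogrowthSubspace T r ∧
    (∀ ξ η : H, ξ ∈ cogrowthSubspace T r → η ∈ cogrowthSubspace T r →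
      ξ + η ∈ cogrowthSubspace T r) ∧
    (∀ (c : ℂ) (η : H), η ∈ cogrowthSubspace T r → c • η ∈ cogrowthSubspace T r) ∧
    (∀ S : H →L[ℂ] H, S * T = T * S →
      ∀ η ∈ cogrowthSubspace T r, S η ∈ cogrowthSubspace T r) := by
  open CogrowthAux in
  refine ⟨?_, ?_, ?_, ?_, ?_⟩
  · -- closed
    refine IsSeqClosed.isClosed ?_
    intro x p hx hp
    refine bwd T hr zero_le_one zero_le_two ?_
    intro k
    have hδ : (0:ℝ) < 1 / ((k : ℝ) + 1) := by positivity
    obtain ⟨j, hj⟩ : ∃ j, ‖x j - p‖ < 1 / ((k : ℝ) + 1) := by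
      obtain ⟨N, hN⟩ := Metric.tendsto_atTop.1 hp _ hδ
      exact ⟨N, by simpa [dist_eq_norm] using hN N le_rfl⟩
    filter_upwards [fwd T hr (hx j) k] with n hn
    obtain ⟨ξ, h1, h2⟩ := hn
    refine ⟨ξ, ?_, by rw [one_mul]; exact h2⟩
    calc ‖(T ^ n) ξ - p‖ = ‖((T ^ n) ξ - x j) + (x j - p)‖ := by abel_nf
      _ ≤ ‖(T ^ n) ξ - x j‖ + ‖x j - p‖ := norm_add_le _ _
      _ ≤ 1 / ((k : ℝ) + 1) + 1 / ((k : ℝ) + 1) := add_le_add h1 hj.le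
      _ = 2 / ((k : ℝ) + 1) := by ring
  · -- zero
    refine ⟨fun _ => 0, ?_, ?_⟩
    · simpa using tendsto_const_nhds
    · have h : ∀ᶠ n : ℕ in atTop, ((‖(0:H)‖₊ : ℝ≥0∞) ^ (1 / (n : ℝ))) ≤ 0 := by
        filter_upwards [eventually_ge_atTop 1] with n hn
        have hn' : (0 : ℝ) < (n : ℝ) := by exact_mod_cast hn
        have : (0:ℝ) < 1 / (n : ℝ) := by positivity
        simp [ENNReal.zero_rpow_of_pos this]
        omega
      exact (Filter.limsup_le_of_le (by isBoundedDefault) h).trans zero_le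
  · -- add
    intro ξ η hξ hη
    refine bwd T hr zero_le_two zero_le_two ?_
    intro k
    filter_upwards [fwd T hr hξ k, fwd T hr hη k] with n hn1 hn2
    obtain ⟨ξ₁, h11, h12⟩ := hn1
    obtain ⟨ξ₂, h21, h22⟩ := hn2
    refine ⟨ξ₁ + ξ₂, ?_, ?_⟩
    · have : (T ^ n) (ξ₁ + ξ₂) - (ξ + η) = ((T ^ n) ξ₁ - ξ) + ((T ^ n) ξ₂ - η) := by
        rw [map_add]; abel
      rw [this]
      calc ‖((T ^ n) ξ₁ - ξ) + ((T ^ n) ξ₂ - η)‖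
          ≤ ‖(T ^ n) ξ₁ - ξ‖ + ‖(T ^ n) ξ₂ - η‖ := norm_add_le _ _
        _ ≤ 1 / ((k : ℝ) + 1) + 1 / ((k : ℝ) + 1) := add_le_add h11 h21
        _ = 2 / ((k : ℝ) + 1) := by ring
    · calc ‖ξ₁ + ξ₂‖ ≤ ‖ξ₁‖ + ‖ξ₂‖ := norm_add_le _ _
        _ ≤ 2 * ck r k ^ n := by linarith
  · -- smul
    intro c η hη
    refine bwd T hr (norm_nonneg c) (norm_nonneg c) ?_
    intro k
    filter_upwards [fwd T hr hη k] with n hn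
    obtain ⟨ξ, h1, h2⟩ := hn
    refine ⟨c • ξ, ?_, ?_⟩
    · have : (T ^ n) (c • ξ) - c • η = c • ((T ^ n) ξ - η) := by
        rw [map_smul, smul_sub]
      rw [this, norm_smul]
      calc ‖c‖ * ‖(T ^ n) ξ - η‖ ≤ ‖c‖ * (1 / ((k : ℝ) + 1)) :=
            mul_le_mul_of_nonneg_left h1 (norm_nonneg c)
        _ = ‖c‖ / ((k : ℝ) + 1) := by ring
    · rw [norm_smul]
      exact mul_le_mul_of_nonneg_left h2 (norm_nonneg c)
  · -- hyperinvariance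
    intro S hST η hη
    refine bwd T hr (norm_nonneg S) (norm_nonneg S) ?_
    intro k
    filter_upwards [fwd T hr hη k] with n hn
    obtain ⟨ξ, h1, h2⟩ := hn
    refine ⟨S ξ, ?_, ?_⟩
    · have hc : (Commute S T) := hST
      have hcn : S * T ^ n = T ^ n * S := (hc.pow_right n)
      have : (T ^ n) (S ξ) = S ((T ^ n) ξ) := by
        rw [← ContinuousLinearMap.mul_apply, ← hcn, ContinuousLinearMap.mul_apply]
      rw [this, ← map_sub]
      calc ‖S ((T ^ n) ξ - η)‖ ≤ ‖S‖ * ‖(T ^ n) ξ - η‖ := S.le_opNorm _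
        _ ≤ ‖S‖ * (1 / ((k : ℝ) + 1)) := mul_le_mul_of_nonneg_left h1 (norm_nonneg S)
        _ = ‖S‖ / ((k : ℝ) + 1) := by ring
    · calc ‖S ξ‖ ≤ ‖S‖ * ‖ξ‖ := S.le_opNorm _
        _ ≤ ‖S‖ * ck r k ^ n := mul_le_mul_of_nonneg_left h2 (norm_nonneg S)
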